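/- Under the assumptions of the super-spreader branching model with age-dependent continuous rates β₀, β₁, μ, σ ≥ 0 and μ(a)+σ(a) ≥ ε > 0 for large a, the basic reproduction number satisfies R₀ = E[R_ind] = ∫₀^∞ (β₀(a)+β₁(a)) e^{−∫₀^a (μ(τ)+σ(τ))dτ} da, independent of the super-spreader event rate λ. -/

import Mathlib

open MeasureTheory Real Set Filter Topology

/-- In the super-spreader branching model with age-dependent
continuous nonnegative bounded rates `β₀, β₁` and continuous nonnegative
`μ, σ` with `μ(a)+σ(a) ≥ ε > 0` for `a ≥ ā`, the expected number of secondary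
cases `R₀ = E[R_ind]` decomposes as the deterministic-contact expectation
`E[Z(∫₀^A β₀)] = ∫₀^∞ (∫₀^a β₀)(μ(a)+σ(a))κ(a) da` (with `A` having survival
function `κ(a) = e^{−∫₀^a(μ+σ)}`) plus the super-spreader contribution
`(1/λ)Σ_{i} E[β₁(T_i)κ(T_i)]` over the Gamma-distributed arrival times, and
equals `∫₀^∞ (β₀(a)+β₁(a)) κ(a) da`, independently of the event rate `λ`. -/
theorem R0_formula (lam : ℝ) (hlam : 0 < lam)
    (μ σ β₀ β₁ : ℝ → ℝ) (hμ : Continuous μ) (hσ : Continuous σ)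
    (hμ0 : ∀ a, 0 ≤ μ a) (hσ0 : ∀ a, 0 ≤ σ a)
    (hβ₀ : Continuous β₀) (hβ₀0 : ∀ a, 0 ≤ β₀ a)
    (hβ₁ : Continuous β₁) (hβ₁0 : ∀ a, 0 ≤ β₁ a)
    (M : ℝ) (hβ₀bdd : ∀ a, β₀ a ≤ M) (hβ₁bdd : ∀ a, β₁ a ≤ M)
    (ε abar : ℝ) (hε : 0 < ε) (hrec : ∀ a, abar ≤ a → ε ≤ μ a + σ a)
    (κ : ℝ → ℝ) (hκ : ∀ a, κ a = Real.exp (-∫ τ in (0:ℝ)..a, (μ τ + σ τ))) :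
    (∫ a in Set.Ioi (0 : ℝ),
        (∫ τ in (0:ℝ)..a, β₀ τ) * ((μ a + σ a) * κ a))
      + (1 / lam) * (∑' i : ℕ,
          ∫ t in Set.Ioi (0 : ℝ), β₁ t * κ t *
            (lam * (lam * t) ^ i * Real.exp (-lam * t) / (Nat.factorial i)))
      = ∫ a in Set.Ioi (0 : ℝ), (β₀ a + β₁ a) * κ a := by
  have hgc : Continuous (fun a => μ a + σ a) := hμ.add hσ
  have hg0 : ∀ a, 0 ≤ μ a + σ a := fun a => add_nonneg (hμ0 a) (hσ0 a)
  set b : ℝ := max abar 0 with hbdef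
  have hb0 : (0:ℝ) ≤ b := le_max_right _ _
  have hM : 0 ≤ M := le_trans (hβ₀0 0) (hβ₀bdd 0)
  have hκpos : ∀ a, 0 < κ a := fun a => by rw [hκ]; exact Real.exp_pos _
  -- exponential bound for κ
  have hGlb : ∀ a, 0 ≤ a → ε * a - ε * b ≤ ∫ τ in (0:ℝ)..a, (μ τ + σ τ) := by
    intro a ha
    rcases le_total a b with h | h
    · have h1 : (0:ℝ) ≤ ∫ τ in (0:ℝ)..a, (μ τ + σ τ) :=
        intervalIntegral.integral_nonneg ha (fun x _ => hg0 x)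
      nlinarith
    · have e1 : ∫ τ in (0:ℝ)..a, (μ τ + σ τ)
          = (∫ τ in (0:ℝ)..b, (μ τ + σ τ)) + ∫ τ in b..a, (μ τ + σ τ) :=
        (intervalIntegral.integral_add_adjacent_intervals (hgc.intervalIntegrable _ _)
          (hgc.intervalIntegrable _ _)).symm
      have h1 : (0:ℝ) ≤ ∫ τ in (0:ℝ)..b, (μ τ + σ τ) :=
        intervalIntegral.integral_nonneg hb0 (fun x _ => hg0 x)
      have h2 : ∫ τ in b..a, (fun _ => ε) τ ≤ ∫ τ in b..a, (μ τ + σ τ) := by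
        apply intervalIntegral.integral_mono_on h intervalIntegrable_const
          (hgc.intervalIntegrable _ _)
        intro x hx
        exact hrec x (le_trans (le_max_left _ _) hx.1)
      rw [intervalIntegral.integral_const, smul_eq_mul] at h2
      nlinarith
  have hκle : ∀ a, 0 ≤ a → κ a ≤ Real.exp (ε * b) * Real.exp (-(ε * a)) := by
    intro a ha
    rw [hκ, ← Real.exp_add]
    apply Real.exp_le_exp.2
    have := hGlb a ha
    linarith
  -- derivatives
  have hGd : ∀ a : ℝ, HasDerivAt (fun x => ∫ τ in (0:ℝ)..x, (μ τ + σ τ)) (μ a + σ a) a := by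
    intro a
    exact intervalIntegral.integral_hasDerivAt_right (hgc.intervalIntegrable _ _)
      (hgc.stronglyMeasurableAtFilter _ _) hgc.continuousAt
  have hκfun : κ = fun x => Real.exp (-∫ τ in (0:ℝ)..x, (μ τ + σ τ)) := funext hκ
  have hκd : ∀ a : ℝ, HasDerivAt κ (-(μ a + σ a) * κ a) a := by
    intro a
    rw [hκfun]
    have := ((hGd a).neg).exp
    convert this using 1
    all_goals simp only [Pi.neg_apply]
    ring
  have hκcont : Continuous κ := by
    rw [hκfun]
    exact Real.continuous_exp.comp
      ((continuous_iff_continuousAt.2 fun a => (hGd a).continuousAt).neg)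
  have hFd : ∀ a : ℝ, HasDerivAt (fun x => ∫ τ in (0:ℝ)..x, β₀ τ) (β₀ a) a := by
    intro a
    exact intervalIntegral.integral_hasDerivAt_right (hβ₀.intervalIntegrable _ _)
      (hβ₀.stronglyMeasurableAtFilter _ _) hβ₀.continuousAt
  have hFcont : Continuous (fun x => ∫ τ in (0:ℝ)..x, β₀ τ) :=
    continuous_iff_continuousAt.2 fun a => (hFd a).continuousAt
  have hF0 : (∫ τ in (0:ℝ)..(0:ℝ), β₀ τ) = 0 := intervalIntegral.integral_same
  have hFnn : ∀ a, 0 ≤ a → 0 ≤ ∫ τ in (0:ℝ)..a, β₀ τ := fun a ha =>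
    intervalIntegral.integral_nonneg ha (fun x _ => hβ₀0 x)
  have hFle : ∀ a, 0 ≤ a → (∫ τ in (0:ℝ)..a, β₀ τ) ≤ M * a := by
    intro a ha
    have : (∫ τ in (0:ℝ)..a, β₀ τ) ≤ ∫ τ in (0:ℝ)..a, (fun _ => M) τ :=
      intervalIntegral.integral_mono_on ha (hβ₀.intervalIntegrable _ _)
        intervalIntegrable_const (fun x _ => hβ₀bdd x)
    rw [intervalIntegral.integral_const, smul_eq_mul] at this
    linarith [this]
  have hHd : ∀ a : ℝ, HasDerivAt (fun x => (∫ τ in (0:ℝ)..x, β₀ τ) * κ x)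
      (β₀ a * κ a + (∫ τ in (0:ℝ)..a, β₀ τ) * (-(μ a + σ a) * κ a)) a :=
    fun a => (hFd a).mul (hκd a)
  -- integrability of the exponential dominator and of β·κ
  have intExp : IntegrableOn (fun a => Real.exp (ε * b) * Real.exp (-(ε * a))) (Ioi (0:ℝ)) := by
    have := (exp_neg_integrableOn_Ioi 0 hε).const_mul (Real.exp (ε * b))
    simp only [neg_mul] at this; exact this
  have key_int : ∀ β : ℝ → ℝ, Continuous β → (∀ a, 0 ≤ β a) → (∀ a, β a ≤ M) →
      IntegrableOn (fun t => β t * κ t) (Ioi (0:ℝ)) := by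
    intro β hc h0 hb'
    apply Integrable.mono' (intExp.const_mul M)
    · exact (hc.mul hκcont).aestronglyMeasurable
    · filter_upwards [ae_restrict_mem measurableSet_Ioi] with a ha
      rw [Real.norm_eq_abs, abs_of_nonneg (mul_nonneg (h0 a) (hκpos a).le)]
      have h1 : β a * κ a ≤ M * κ a := by nlinarith [(hκpos a).le, hb' a, h0 a]
      have h2 : κ a ≤ Real.exp (ε * b) * Real.exp (-(ε * a)) := hκle a (le_of_lt ha)
      nlinarith
  have int_β₀κ : IntegrableOn (fun t => β₀ t * κ t) (Ioi (0:ℝ)) :=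
    key_int β₀ hβ₀ hβ₀0 hβ₀bdd
  have int_β₁κ : IntegrableOn (fun t => β₁ t * κ t) (Ioi (0:ℝ)) :=
    key_int β₁ hβ₁ hβ₁0 hβ₁bdd
  -- interval FTC and splitting
  have hf₁cont : Continuous (fun a => (∫ τ in (0:ℝ)..a, β₀ τ) * ((μ a + σ a) * κ a)) :=
    hFcont.mul (hgc.mul hκcont)
  have hFTC : ∀ T : ℝ, (∫ a in (0:ℝ)..T,
      (β₀ a * κ a + (∫ τ in (0:ℝ)..a, β₀ τ) * (-(μ a + σ a) * κ a)))
      = (∫ τ in (0:ℝ)..T, β₀ τ) * κ T - (∫ τ in (0:ℝ)..(0:ℝ), β₀ τ) * κ 0 := by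
    intro T
    exact intervalIntegral.integral_eq_sub_of_hasDerivAt (fun x _ => hHd x)
      (((hβ₀.mul hκcont).add (hFcont.mul ((hgc.neg).mul hκcont))).intervalIntegrable _ _)
  have hsplit : ∀ T : ℝ, (∫ a in (0:ℝ)..T,
      (β₀ a * κ a + (∫ τ in (0:ℝ)..a, β₀ τ) * (-(μ a + σ a) * κ a)))
      = (∫ a in (0:ℝ)..T, β₀ a * κ a)
        - ∫ a in (0:ℝ)..T, (∫ τ in (0:ℝ)..a, β₀ τ) * ((μ a + σ a) * κ a) := by
    intro T
    rw [← intervalIntegral.integral_sub ((show Continuous fun a => β₀ a * κ a from hβ₀.mul hκcont).intervalIntegrable _ _)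
      (hf₁cont.intervalIntegrable _ _)]
    apply intervalIntegral.integral_congr
    intro x _
    ring
  have hIval : ∀ T : ℝ, (∫ a in (0:ℝ)..T, (∫ τ in (0:ℝ)..a, β₀ τ) * ((μ a + σ a) * κ a))
      = (∫ a in (0:ℝ)..T, β₀ a * κ a) - (∫ τ in (0:ℝ)..T, β₀ τ) * κ T := by
    intro T
    have h1 := hFTC T
    have h2 := hsplit T
    rw [hF0] at h1
    linarith
  -- integrability of the first integrand on Ioi 0
  have int_f₁ : IntegrableOn (fun a => (∫ τ in (0:ℝ)..a, β₀ τ) * ((μ a + σ a) * κ a))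
      (Ioi (0:ℝ)) := by
    apply integrableOn_Ioi_of_intervalIntegral_norm_bounded
      (∫ a in Ioi (0:ℝ), M * (Real.exp (ε * b) * Real.exp (-(ε * a)))) 0
      (fun T => hf₁cont.integrableOn_Ioc) tendsto_id
    filter_upwards [eventually_ge_atTop (0:ℝ)] with T hT
    have e1 : (∫ x in (0:ℝ)..(id T), ‖(∫ τ in (0:ℝ)..x, β₀ τ) * ((μ x + σ x) * κ x)‖)
        = ∫ x in (0:ℝ)..T, (∫ τ in (0:ℝ)..x, β₀ τ) * ((μ x + σ x) * κ x) := by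
      apply intervalIntegral.integral_congr
      intro x hx
      simp only [id_eq] at hx
      rw [Set.uIcc_of_le hT] at hx
      exact Real.norm_of_nonneg (mul_nonneg (hFnn x hx.1)
        (mul_nonneg (hg0 x) (hκpos x).le))
    rw [e1, hIval T]
    have h3 : (∫ a in (0:ℝ)..T, β₀ a * κ a)
        ≤ ∫ a in (0:ℝ)..T, M * (Real.exp (ε * b) * Real.exp (-(ε * a))) := by
      apply intervalIntegral.integral_mono_on hT ((hβ₀.mul hκcont).intervalIntegrable _ _)
        ((continuous_const.mul (continuous_const.mul
          (Real.continuous_exp.comp (continuous_const.mul continuous_id).neg))).intervalIntegrable _ _)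
      intro x hx
      have h1 : β₀ x * κ x ≤ M * κ x := by nlinarith [(hκpos x).le, hβ₀bdd x, hβ₀0 x]
      have h2 : κ x ≤ Real.exp (ε * b) * Real.exp (-(ε * x)) := hκle x hx.1
      simp only [Pi.mul_apply, Function.comp_apply, Pi.neg_apply, id_eq]
      nlinarith
    have h4 : (∫ a in (0:ℝ)..T, M * (Real.exp (ε * b) * Real.exp (-(ε * a))))
        ≤ ∫ a in Ioi (0:ℝ), M * (Real.exp (ε * b) * Real.exp (-(ε * a))) := by
      rw [intervalIntegral.integral_of_le hT]
      apply setIntegral_mono_set (intExp.const_mul M)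
      · exact ae_of_all _ fun a => by positivity
      · exact (Set.Ioc_subset_Ioi_self).eventuallyLE
    have h5 : 0 ≤ (∫ τ in (0:ℝ)..T, β₀ τ) * κ T :=
      mul_nonneg (hFnn T hT) (hκpos T).le
    linarith
  -- limit of F·κ at infinity
  have hHtend : Tendsto (fun a : ℝ => (∫ τ in (0:ℝ)..a, β₀ τ) * κ a) atTop (𝓝 0) := by
    have h1 : Tendsto (fun a : ℝ => (M * Real.exp (ε * b) / ε)
        * ((ε * a) ^ 1 * Real.exp (-(ε * a)))) atTop (𝓝 ((M * Real.exp (ε * b) / ε) * 0)) :=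
      tendsto_const_nhds.mul ((tendsto_pow_mul_exp_neg_atTop_nhds_zero 1).comp
        (tendsto_id.const_mul_atTop hε))
    rw [mul_zero] at h1
    apply squeeze_zero' ?_ ?_ h1
    · filter_upwards [eventually_ge_atTop (0:ℝ)] with a ha
      exact mul_nonneg (hFnn a ha) (hκpos a).le
    · filter_upwards [eventually_ge_atTop (0:ℝ)] with a ha
      have h2 : (∫ τ in (0:ℝ)..a, β₀ τ) * κ a
          ≤ (M * a) * (Real.exp (ε * b) * Real.exp (-(ε * a))) := by
        apply mul_le_mul (hFle a ha) (hκle a ha) (hκpos a).le (by positivity)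
      have h3 : (M * a) * (Real.exp (ε * b) * Real.exp (-(ε * a)))
          = (M * Real.exp (ε * b) / ε) * ((ε * a) ^ 1 * Real.exp (-(ε * a))) := by
        field_simp
      linarith [h2, h3.le]
  -- main improper FTC
  have hadd_eq : (fun a => β₀ a * κ a + (∫ τ in (0:ℝ)..a, β₀ τ) * (-(μ a + σ a) * κ a))
      = fun a => β₀ a * κ a - (∫ τ in (0:ℝ)..a, β₀ τ) * ((μ a + σ a) * κ a) := by
    funext a; ring
  have hmain : (∫ a in Ioi (0:ℝ),
      (β₀ a * κ a + (∫ τ in (0:ℝ)..a, β₀ τ) * (-(μ a + σ a) * κ a)))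
      = 0 - (∫ τ in (0:ℝ)..(0:ℝ), β₀ τ) * κ 0 := by
    apply integral_Ioi_of_hasDerivAt_of_tendsto' (fun x _ => hHd x) ?_ hHtend
    rw [hadd_eq]
    exact int_β₀κ.sub int_f₁
  have eq1 : (∫ a in Ioi (0:ℝ), (∫ τ in (0:ℝ)..a, β₀ τ) * ((μ a + σ a) * κ a))
      = ∫ a in Ioi (0:ℝ), β₀ a * κ a := by
    rw [hadd_eq] at hmain
    rw [integral_sub int_β₀κ int_f₁, hF0] at hmain
    linarith
  -- the super-spreader sum
  have hterm : ∀ t : ℝ, ∀ i : ℕ,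
      β₁ t * κ t * (lam * (lam * t) ^ i * Real.exp (-lam * t) / (Nat.factorial i))
      = (β₁ t * κ t * lam * Real.exp (-lam * t)) * ((lam * t) ^ i / (Nat.factorial i)) := by
    intro t i; ring
  have hsummable : ∀ t : ℝ, Summable (fun i : ℕ =>
      β₁ t * κ t * (lam * (lam * t) ^ i * Real.exp (-lam * t) / (Nat.factorial i))) := by
    intro t
    exact ((Real.summable_pow_div_factorial (lam * t)).mul_left
      (β₁ t * κ t * lam * Real.exp (-lam * t))).congr (fun i => (hterm t i).symm)
  have hsum_pt : ∀ t : ℝ, (∑' i : ℕ,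
      β₁ t * κ t * (lam * (lam * t) ^ i * Real.exp (-lam * t) / (Nat.factorial i)))
      = lam * (β₁ t * κ t) := by
    intro t
    rw [tsum_congr (hterm t), tsum_mul_left]
    have h2 : (∑' i : ℕ, ((lam * t) ^ i / (Nat.factorial i : ℝ))) = Real.exp (lam * t) := by
      rw [Real.exp_eq_exp_ℝ, NormedSpace.exp_eq_tsum_div]
    rw [h2]
    have h3 : Real.exp (-lam * t) * Real.exp (lam * t) = 1 := by
      rw [← Real.exp_add, neg_mul, neg_add_cancel, Real.exp_zero]
    calc (β₁ t * κ t * lam * Real.exp (-lam * t)) * Real.exp (lam * t)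
        = (β₁ t * κ t * lam) * (Real.exp (-lam * t) * Real.exp (lam * t)) := by ring
      _ = lam * (β₁ t * κ t) := by rw [h3]; ring
  have hmeas_i : ∀ i : ℕ, AEStronglyMeasurable (fun t : ℝ =>
      β₁ t * κ t * (lam * (lam * t) ^ i * Real.exp (-lam * t) / (Nat.factorial i)))
      (volume.restrict (Ioi (0:ℝ))) := by
    intro i
    exact ((hβ₁.mul hκcont).mul (((continuous_const.mul
      ((continuous_const.mul continuous_id).pow i)).mul
      (Real.continuous_exp.comp (continuous_const.mul continuous_id))).div_const
      _)).aestronglyMeasurable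
  have hnn : ∀ i : ℕ, ∀ t : ℝ, t ∈ Ioi (0:ℝ) →
      0 ≤ β₁ t * κ t * (lam * (lam * t) ^ i * Real.exp (-lam * t) / (Nat.factorial i)) := by
    intro i t ht
    have ht' : (0:ℝ) < t := ht
    have h1 : 0 ≤ (lam * t) ^ i := pow_nonneg (by positivity) i
    have := (hκpos t).le
    have := hβ₁0 t
    positivity
  have hlin : (∑' i : ℕ, ∫⁻ t in Ioi (0:ℝ), ‖β₁ t * κ t *
      (lam * (lam * t) ^ i * Real.exp (-lam * t) / (Nat.factorial i))‖₊) ≠ ⊤ := by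
    have e1 : ∀ i : ℕ, (∫⁻ t in Ioi (0:ℝ), ‖β₁ t * κ t *
        (lam * (lam * t) ^ i * Real.exp (-lam * t) / (Nat.factorial i))‖₊)
        = ∫⁻ t in Ioi (0:ℝ), ENNReal.ofReal (β₁ t * κ t *
        (lam * (lam * t) ^ i * Real.exp (-lam * t) / (Nat.factorial i))) := by
      intro i
      apply lintegral_congr_ae
      filter_upwards [ae_restrict_mem measurableSet_Ioi] with t ht
      rw [← enorm_eq_nnnorm, ← ofReal_norm, Real.norm_of_nonneg (hnn i t ht)]
    have e2 : (∑' i : ℕ, ∫⁻ t in Ioi (0:ℝ), ENNReal.ofReal (β₁ t * κ t *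
        (lam * (lam * t) ^ i * Real.exp (-lam * t) / (Nat.factorial i))))
        = ∫⁻ t in Ioi (0:ℝ), ∑' i : ℕ, ENNReal.ofReal (β₁ t * κ t *
        (lam * (lam * t) ^ i * Real.exp (-lam * t) / (Nat.factorial i))) := by
      symm
      apply lintegral_tsum
      intro i
      exact ((hmeas_i i).aemeasurable).ennreal_ofReal
    have e3 : (∫⁻ t in Ioi (0:ℝ), ∑' i : ℕ, ENNReal.ofReal (β₁ t * κ t *
        (lam * (lam * t) ^ i * Real.exp (-lam * t) / (Nat.factorial i))))
        = ∫⁻ t in Ioi (0:ℝ), ENNReal.ofReal (lam * (β₁ t * κ t)) := by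
      apply lintegral_congr_ae
      filter_upwards [ae_restrict_mem measurableSet_Ioi] with t ht
      rw [← ENNReal.ofReal_tsum_of_nonneg (fun i => hnn i t ht) (hsummable t), hsum_pt t]
    rw [tsum_congr e1, e2, e3]
    exact (int_β₁κ.const_mul lam).lintegral_lt_top.ne
  have hswap : (∑' i : ℕ, ∫ t in Ioi (0:ℝ), β₁ t * κ t *
      (lam * (lam * t) ^ i * Real.exp (-lam * t) / (Nat.factorial i)))
      = lam * ∫ t in Ioi (0:ℝ), β₁ t * κ t := by
    rw [← integral_tsum hmeas_i hlin]
    rw [← integral_const_mul]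
    exact integral_congr_ae (ae_of_all _ fun t => hsum_pt t)
  -- assemble
  rw [eq1, hswap]
  have hl : (1 / lam) * (lam * ∫ t in Ioi (0:ℝ), β₁ t * κ t)
      = ∫ t in Ioi (0:ℝ), β₁ t * κ t := by
    field_simp
  rw [hl, ← integral_add int_β₀κ int_β₁κ]
  apply setIntegral_congr_fun measurableSet_Ioi
  intro x _
  ring
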